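/- Let 0 ≤ B ≤ A be bounded operators on a separable Hilbert space, and suppose B = ∑_{j∈Λ} ξ_j P_j for rank-one projections P_j and scalars ξ_j > 1 (SOT convergence). Then tr((A−I)₊) ≥ ∑_{j∈Λ} (ξ_j − 1), where (A−I)₊ is the positive part of A−I. -/

import Mathlib

open scoped BigOperators ENNReal
open ContinuousLinearMap

variable {H : Type*} [NormedAddCommGroup H] [InnerProductSpace ℂ H]

/-- The rank-one operator `x ↦ ⟪v, x⟫ • v`. -/
noncomputable def rankOneProj (v : H) : H →L[ℂ] H := (innerSL ℂ v).smulRight v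

/-- A rank-one (orthogonal) projection: `v ⊗ v` for a unit vector `v`. -/
def IsRankOneProjection (P : H →L[ℂ] H) : Prop := ∃ v : H, ‖v‖ = 1 ∧ P = rankOneProj v

private lemma exists_sqrt [CompleteSpace H] (T : H →L[ℂ] H) (hT : T.IsPositive) :
    ∃ R : H →L[ℂ] H, IsSelfAdjoint R ∧ R ∘L R = T := by
  obtain ⟨R, hR1, -, hR2⟩ := CFC.exists_sqrt_of_isSelfAdjoint_of_quasispectrumRestricts
    hT.isSelfAdjoint hT.spectrumRestricts
  exact ⟨R, hR1, by rw [← hR2]; rfl⟩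

lemma inner_T_eq [CompleteSpace H] {T R : H →L[ℂ] H} (hR : IsSelfAdjoint R)
    (hRT : R ∘L R = T) (x : H) : (inner ℂ (T x) x : ℂ).re = ‖R x‖ ^ 2 := by
  have hsym := (isSelfAdjoint_iff_isSymmetric.mp hR)
  have h1 : (inner ℂ (T x) x : ℂ) = inner ℂ (R x) (R x) := by
    rw [← hRT]; exact hsym (R x) x
  have h2 : RCLike.re (inner ℂ (R x) (R x) : ℂ) = ‖R x‖ ^ 2 := inner_self_eq_norm_sq _
  rw [h1, ← h2]; rfl



lemma parseval_sq [CompleteSpace H] (e : HilbertBasis ℕ ℂ H) (y : H) :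
    HasSum (fun n => ‖(inner ℂ y (e n) : ℂ)‖ ^ 2) (‖y‖ ^ 2) := by
  have h2 := (e.hasSum_inner_mul_inner y y).mapL Complex.reCLM
  have he : ∀ n, Complex.reCLM ((inner ℂ y (e n) : ℂ) * inner ℂ (e n) y)
      = ‖(inner ℂ y (e n) : ℂ)‖ ^ 2 := by
    intro n
    have h3 : (inner ℂ (e n) y : ℂ) = starRingEnd ℂ (inner ℂ y (e n)) := (inner_conj_symm _ _).symm
    rw [Complex.reCLM_apply, h3, Complex.mul_conj]
    rw [Complex.normSq_eq_norm_sq]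
    norm_cast
  have hy : Complex.reCLM (inner ℂ y y : ℂ) = ‖y‖ ^ 2 := by
    rw [Complex.reCLM_apply]
    have := @inner_self_eq_norm_sq ℂ H _ _ _ y
    rw [← this]; rfl
  rw [← hy]
  exact h2.congr_fun (fun n => (he n).symm)

lemma trace_dom [CompleteSpace H] (e : HilbertBasis ℕ ℂ H) {T : H →L[ℂ] H} (hT : T.IsPositive)
    {m : ℕ} {f : Fin m → H} (hf : Orthonormal ℂ f) :
    ENNReal.ofReal (∑ i, (inner ℂ (T (f i)) (f i) : ℂ).re)
      ≤ ∑' n, ENNReal.ofReal ((inner ℂ (T (e n)) (e n) : ℂ).re) := by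
  obtain ⟨R, hR, hRT⟩ := exists_sqrt T hT
  have hsym := isSelfAdjoint_iff_isSymmetric.mp hR
  calc ENNReal.ofReal (∑ i, (inner ℂ (T (f i)) (f i) : ℂ).re)
      = ∑ i, ENNReal.ofReal (‖R (f i)‖ ^ 2) := by
        rw [ENNReal.ofReal_sum_of_nonneg (fun i _ => by
          rw [inner_T_eq hR hRT]; positivity)]
        exact Finset.sum_congr rfl fun i _ => by rw [inner_T_eq hR hRT]
    _ = ∑ i, ∑' n, ENNReal.ofReal (‖(inner ℂ (f i) (R (e n)) : ℂ)‖ ^ 2) := by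
        refine Finset.sum_congr rfl fun i _ => ?_
        have hp := parseval_sq e (R (f i))
        rw [← hp.tsum_eq, ENNReal.ofReal_tsum_of_nonneg (fun n => by positivity) hp.summable]
        exact tsum_congr fun n =>
          congrArg (fun z : ℂ => ENNReal.ofReal (‖z‖ ^ 2)) (hsym (f i) (e n))
    _ = ∑' n, ∑ i, ENNReal.ofReal (‖(inner ℂ (f i) (R (e n)) : ℂ)‖ ^ 2) := by
        rw [← tsum_fintype (L := .unconditional _), ENNReal.tsum_comm]
        exact tsum_congr fun n => tsum_fintype _
    _ ≤ ∑' n, ENNReal.ofReal ((inner ℂ (T (e n)) (e n) : ℂ).re) := by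
        refine ENNReal.tsum_le_tsum fun n => ?_
        rw [inner_T_eq hR hRT,
          ← ENNReal.ofReal_sum_of_nonneg (fun i _ => by positivity)]
        exact ENNReal.ofReal_le_ofReal (hf.sum_inner_products_le (R (e n)))

lemma onb_sum_sq {E : Type*} [NormedAddCommGroup E] [InnerProductSpace ℂ E]
    {ι : Type*} [Fintype ι] (b : OrthonormalBasis ι ℂ E) (x : E) :
    ∑ i, ‖(inner ℂ x (b i) : ℂ)‖ ^ 2 = ‖x‖ ^ 2 := by
  have h := b.sum_inner_mul_inner x x
  have he : ∀ i, ((inner ℂ x (b i) : ℂ) * inner ℂ (b i) x).re = ‖(inner ℂ x (b i) : ℂ)‖ ^ 2 := by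
    intro i
    have h3 : (inner ℂ (b i) x : ℂ) = starRingEnd ℂ (inner ℂ x (b i)) := (inner_conj_symm _ _).symm
    rw [h3, Complex.mul_conj, Complex.normSq_eq_norm_sq]
    norm_cast
  have hx : (inner ℂ x x : ℂ).re = ‖x‖ ^ 2 := by
    have := @inner_self_eq_norm_sq ℂ E _ _ _ x
    rw [← this]; rfl
  calc ∑ i, ‖(inner ℂ x (b i) : ℂ)‖ ^ 2
      = ∑ i, ((inner ℂ x (b i) : ℂ) * inner ℂ (b i) x).re := by
        exact Finset.sum_congr rfl fun i _ => (he i).symm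
    _ = ((∑ i, (inner ℂ x (b i) : ℂ) * inner ℂ (b i) x)).re := by rw [Complex.re_sum]
    _ = ‖x‖ ^ 2 := by rw [h, hx]


/-- Here the positive part `(A - I)₊` is encoded by its characteristic property:
`T = (A - I)₊` and `S = (A - I)₋` are the unique positive operators with `A - 1 = T - S` and
`T ∘ S = 0`. The trace is computed in the orthonormal basis `e`, with values in `[0, ∞]`. -/
theorem stmt18 [CompleteSpace H] (e : HilbertBasis ℕ ℂ H)
    (A B : H →L[ℂ] H) (hB : B.IsPositive) (hAB : (A - B).IsPositive)
    (Λ : Set ℕ) (ξ : ℕ → ℝ) (hξ : ∀ j ∈ Λ, 1 < ξ j)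
    (P : ℕ → H →L[ℂ] H) (hP : ∀ j ∈ Λ, IsRankOneProjection (P j))
    (hsum : ∀ x : H, HasSum (fun j : Λ => ξ j • P j x) (B x))
    (T S : H →L[ℂ] H) (hT : T.IsPositive) (hS : S.IsPositive)
    (hdecomp : A - 1 = T - S) (hTS : T ∘L S = 0) :
    ∑' j : Λ, ENNReal.ofReal (ξ j - 1)
      ≤ ∑' n, ENNReal.ofReal ((inner ℂ (T (e n)) (e n) : ℂ).re) := by

  classical
  -- choose unit vectors
  have hv : ∀ j : Λ, ∃ v : H, ‖v‖ = 1 ∧ P j = rankOneProj v := fun j => hP j j.2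
  choose v hv1 hv2 using hv
  rw [ENNReal.tsum_eq_iSup_sum]
  refine iSup_le fun s => ?_
  -- the finite-dimensional subspace
  set M : Submodule ℂ H := Submodule.span ℂ ((s.image v : Finset H) : Set H) with hM
  haveI : FiniteDimensional ℂ M := FiniteDimensional.span_finset ℂ _
  set m := Module.finrank ℂ M with hm
  have hmcard : m ≤ s.card := by
    refine le_trans ?_ (Finset.card_image_le (f := v))
    exact finrank_span_finset_le_card (s.image v)
  set b := stdOrthonormalBasis ℂ M with hb
  set f : Fin m → H := fun i => (b i : H) with hf
  have hcoe_inner : ∀ (x y : M), (inner ℂ x y : ℂ) = (inner ℂ (x : H) (y : H) : ℂ) :=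
    fun x y => rfl
  have hofn : Orthonormal ℂ f := by
    have hbo := b.orthonormal
    rw [orthonormal_iff_ite] at hbo ⊢
    intro i j
    rw [← hbo i j]
    rfl
  have hfnorm : ∀ i, ‖f i‖ = 1 := fun i => hofn.1 i
  -- (b) quadratic form inequality for T
  have hTineq : ∀ x : H, ‖x‖ = 1 →
      (inner ℂ (B x) x : ℂ).re - 1 ≤ (inner ℂ (T x) x : ℂ).re := by
    intro x hx
    have hTeq : T = A - 1 + S := by rw [hdecomp]; abel
    have h1 : (inner ℂ (T x) x : ℂ) = inner ℂ (A x) x - inner ℂ x x + inner ℂ (S x) x := by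
      rw [hTeq]
      simp [inner_sub_left, inner_add_left]
    have h2 : 0 ≤ (inner ℂ ((A - B) x) x : ℂ).re := hAB.re_inner_nonneg_left x
    have h3 : 0 ≤ (inner ℂ (S x) x : ℂ).re := hS.re_inner_nonneg_left x
    have h4 : (inner ℂ ((A - B) x) x : ℂ) = inner ℂ (A x) x - inner ℂ (B x) x := by
      simp [inner_sub_left]
    have h5 : (inner ℂ x x : ℂ).re = 1 := by
      have := @inner_self_eq_norm_sq ℂ H _ _ _ x
      have h6 : (inner ℂ x x : ℂ).re = ‖x‖ ^ 2 := by rw [← this]; rfl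
      rw [h6, hx]; norm_num
    rw [h4] at h2
    simp only [Complex.sub_re, Complex.add_re] at h1 h2 ⊢
    have := congrArg Complex.re h1
    simp only [Complex.sub_re, Complex.add_re] at this
    rw [this, h5]
    linarith
  -- (c) quadratic form of B dominates finite sums
  have hBineq : ∀ x : H,
      ∑ j ∈ s, ξ j * ‖(inner ℂ (v j) x : ℂ)‖ ^ 2 ≤ (inner ℂ (B x) x : ℂ).re := by
    intro x
    set φ : H →L[ℝ] ℝ := Complex.reCLM.comp ((innerSL ℂ x).restrictScalars ℝ) with hφ
    have h := (hsum x).mapL φ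
    have hφB : φ (B x) = (inner ℂ (B x) x : ℂ).re := by
      have h1 : φ (B x) = (inner ℂ x (B x) : ℂ).re := rfl
      have h2 : (inner ℂ x (B x) : ℂ) = starRingEnd ℂ (inner ℂ (B x) x) := (inner_conj_symm _ _).symm
      rw [h1, h2, Complex.conj_re]
    have hterm : ∀ j : Λ, φ (ξ j • P j x) = ξ j * ‖(inner ℂ (v j) x : ℂ)‖ ^ 2 := by
      intro j
      have hPx : P j x = (inner ℂ (v j) x : ℂ) • v j := by rw [hv2 j]; rfl
      have h1 : φ (ξ j • P j x) = (inner ℂ x (ξ j • P j x) : ℂ).re := rfl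
      have h2 : (inner ℂ x ((ξ (j : ℕ) : ℝ) • P j x) : ℂ)
          = (ξ (j : ℕ) : ℝ) • (inner ℂ x (P j x) : ℂ) := by
        rw [← inner_smul_real_right]
        norm_cast
      have h3 : (inner ℂ x (P j x) : ℂ) = (inner ℂ (v j) x : ℂ) * inner ℂ x (v j) := by
        rw [hPx, inner_smul_right]
      have h4 : (inner ℂ (v j) x : ℂ) * inner ℂ x (v j)
          = ((‖(inner ℂ (v j) x : ℂ)‖ ^ 2 : ℝ) : ℂ) := by
        rw [show (inner ℂ x (v j) : ℂ) = starRingEnd ℂ (inner ℂ (v j) x) from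
          (inner_conj_symm _ _).symm, Complex.mul_conj, Complex.normSq_eq_norm_sq]
      rw [h1, h2, h3, h4, Complex.real_smul, ← Complex.ofReal_mul]
      exact Complex.ofReal_re _
    have h' : HasSum (fun j : Λ => ξ j * ‖(inner ℂ (v j) x : ℂ)‖ ^ 2)
        ((inner ℂ (B x) x : ℂ).re) := by
      rw [← hφB]
      exact h.congr_fun fun j => (hterm j).symm
    refine sum_le_hasSum s (fun j _ => ?_) h'
    have := hξ j j.2
    have h0 : (0:ℝ) ≤ ξ j := by linarith
    positivity
  -- (d) Parseval for v j
  have hpars : ∀ j ∈ s, ∑ i, ‖(inner ℂ (v j) (f i) : ℂ)‖ ^ 2 = 1 := by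
    intro j hj
    have hmem : v j ∈ M := by
      apply Submodule.subset_span
      exact_mod_cast Finset.mem_image_of_mem v hj
    have := onb_sum_sq b ⟨v j, hmem⟩
    have hw : ‖(⟨v j, hmem⟩ : M)‖ = 1 := hv1 j
    rw [hw] at this
    have h1 : ∑ i : Fin m, ‖(inner ℂ (v j) (f i) : ℂ)‖ ^ 2
        = ∑ i, ‖(inner ℂ (⟨v j, hmem⟩ : M) (b i) : ℂ)‖ ^ 2 := rfl
    rw [h1, this, one_pow]
  -- main real inequality
  have hreal : ∑ j ∈ s, (ξ j - 1) ≤ ∑ i, (inner ℂ (T (f i)) (f i) : ℂ).re := by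
    have c1 : ∑ j ∈ s, ξ j = ∑ i, ∑ j ∈ s, ξ j * ‖(inner ℂ (v j) (f i) : ℂ)‖ ^ 2 := by
      rw [Finset.sum_comm]
      refine Finset.sum_congr rfl fun j hj => ?_
      rw [← Finset.mul_sum, hpars j hj, mul_one]
    have c2 : ∑ i, ∑ j ∈ s, ξ j * ‖(inner ℂ (v j) (f i) : ℂ)‖ ^ 2
        ≤ ∑ i, (inner ℂ (B (f i)) (f i) : ℂ).re :=
      Finset.sum_le_sum fun i _ => hBineq (f i)
    have c3 : ∑ i, ((inner ℂ (B (f i)) (f i) : ℂ).re - 1)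
        ≤ ∑ i, (inner ℂ (T (f i)) (f i) : ℂ).re :=
      Finset.sum_le_sum fun i _ => hTineq (f i) (hfnorm i)
    have c4 : ∑ i, ((inner ℂ (B (f i)) (f i) : ℂ).re - 1)
        = (∑ i, (inner ℂ (B (f i)) (f i) : ℂ).re) - m := by
      rw [Finset.sum_sub_distrib]
      simp
    have c5 : ∑ j ∈ s, (ξ j - 1) = (∑ j ∈ s, ξ j) - s.card := by
      rw [Finset.sum_sub_distrib]
      simp
    have : (m : ℝ) ≤ s.card := by exact_mod_cast hmcard
    rw [c5]
    rw [c4] at c3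
    rw [c1] at *
    linarith
  -- conclude
  calc ∑ j ∈ s, ENNReal.ofReal (ξ j - 1)
      = ENNReal.ofReal (∑ j ∈ s, (ξ j - 1)) := by
        rw [ENNReal.ofReal_sum_of_nonneg]
        intro j hj
        have := hξ j j.2
        linarith
    _ ≤ ENNReal.ofReal (∑ i, (inner ℂ (T (f i)) (f i) : ℂ).re) :=
        ENNReal.ofReal_le_ofReal hreal
    _ ≤ ∑' n, ENNReal.ofReal ((inner ℂ (T (e n)) (e n) : ℂ).re) := trace_dom e hT hofn
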